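/- Let F = {C(o_i, r_i)}_{i ∈ I} be a countable family of closed spherical caps on S^3 ⊂ E^4 with radii r_i ∈ (0, π/2), whose interiors are pairwise disjoint, and which is unconditionally symmetric (for each i and each coordinate index m, the cap with center σ_m(o_i) and radius r_i belongs to F). Suppose F contains the eight caps of radius arcsin(1/√3) centered at the points (±1/√3, ±1/√3, ±1/√3, 0). Then every cap of F is contained in {x ∈ S^3 : ε⟨x, n⟩ > 0} for some sign ε ∈ {+1, -1} and some n ∈ {(1/√2, 1/√2, 0, 0), (1/√2, -1/√2, 0, 0), e_3, e_4}, i.e., every cap of F is separated by one of these four pairwise orthogonal greatspheres. -/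

import Mathlib

open scoped RealInnerProductSpace

/-- The point `(s/√2, t/√2, 0, 0)`-style center: `(1/√2)(s eᵢ + t eⱼ)` in `E⁴`. -/
noncomputable def twoTangentCenter (i j : Fin 4) (s t : ℝ) : EuclideanSpace ℝ (Fin 4) :=
  (Real.sqrt 2)⁻¹ •
    (s • EuclideanSpace.single i (1 : ℝ) + t • EuclideanSpace.single j (1 : ℝ))

/-- The point `(s₁/√3, s₂/√3, s₃/√3, 0)` in `E⁴`. -/
noncomputable def threeTangentCenter (s₁ s₂ s₃ : ℝ) : EuclideanSpace ℝ (Fin 4) :=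
  (Real.sqrt 3)⁻¹ • (s₁ • EuclideanSpace.single (0 : Fin 4) (1 : ℝ)
    + s₂ • EuclideanSpace.single 1 (1 : ℝ) + s₃ • EuclideanSpace.single 2 (1 : ℝ))

set_option maxHeartbeats 1000000


variable {E : Type*} [NormedAddCommGroup E] [InnerProductSpace ℝ E]

lemma my_inner_self {x : E} (hx : ‖x‖ = 1) : ⟪x, x⟫ = 1 := by
  rw [real_inner_self_eq_norm_sq, hx]; norm_num

lemma my_sep {o n x : E} (ho : ‖o‖ = 1) (hn : ‖n‖ = 1) (hx : ‖x‖ = 1)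
    {r : ℝ} (hr : r ∈ Set.Ioo 0 (Real.pi / 2)) (hon : Real.sin r < ⟪o, n⟫)
    (hxo : Real.cos r ≤ ⟪x, o⟫) : 0 < ⟪x, n⟫ := by
  have hs : 0 < Real.sin r := Real.sin_pos_of_pos_of_lt_pi hr.1
    (lt_trans hr.2 (by linarith [Real.pi_pos]))
  have hc : 0 < Real.cos r := Real.cos_pos_of_mem_Ioo
    ⟨by linarith [Real.pi_pos, hr.1], hr.2⟩
  have hsc : Real.sin r ^ 2 + Real.cos r ^ 2 = 1 := Real.sin_sq_add_cos_sq r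
  set p := ⟪x, o⟫ with hp
  set q := ⟪o, n⟫ with hq
  have hcs := real_inner_mul_inner_self_le (x - p • o) (n - q • o)
  have hxx := my_inner_self hx
  have hoo := my_inner_self ho
  have hnn := my_inner_self hn
  have hxo2 : ⟪o, x⟫ = p := by rw [real_inner_comm]
  have hno : ⟪n, o⟫ = q := by rw [real_inner_comm]
  have e1 : ⟪x - p • o, n - q • o⟫ = ⟪x, n⟫ - p * q := by
    simp [inner_sub_left, inner_sub_right, real_inner_smul_left, real_inner_smul_right,
      hxx, hoo, hxo2, hno, hq, hp, ho]
    try ring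
  have e2 : ⟪x - p • o, x - p • o⟫ = 1 - p ^ 2 := by
    simp only [inner_sub_left, inner_sub_right, real_inner_smul_left, real_inner_smul_right,
      hxx, hoo, hxo2, hp]
    try ring
  have e3 : ⟪n - q • o, n - q • o⟫ = 1 - q ^ 2 := by
    simp only [inner_sub_left, inner_sub_right, real_inner_smul_left, real_inner_smul_right,
      hnn, hoo, hno, real_inner_comm o n, hq]
    try ring
  rw [e1, e2, e3] at hcs
  have hp1 : 1 - p ^ 2 ≤ Real.sin r ^ 2 := by nlinarith
  have hq1 : 1 - q ^ 2 ≤ Real.cos r ^ 2 := by nlinarith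
  have hq0 : 0 ≤ q := le_of_lt (lt_trans hs hon)
  have hpq : Real.cos r * Real.sin r < p * q := by
    have h1 : Real.cos r * q ≤ p * q := mul_le_mul_of_nonneg_right hxo hq0
    have h2 : Real.cos r * Real.sin r < Real.cos r * q := by
      exact mul_lt_mul_of_pos_left hon hc
    linarith
  have hq2 : q ^ 2 ≤ 1 := by
    have := abs_real_inner_le_norm o n
    rw [ho, hn] at this
    nlinarith [abs_nonneg q, sq_abs q, this]
  have h4 : (1 - p ^ 2) * (1 - q ^ 2) ≤ (Real.sin r * Real.cos r) ^ 2 := by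
    have := mul_le_mul hp1 hq1 (by nlinarith) (sq_nonneg (Real.sin r))
    nlinarith [this]
  have h5 : (⟪x, n⟫ - p * q) ^ 2 ≤ (Real.sin r * Real.cos r) ^ 2 := by nlinarith [hcs]
  nlinarith [sq_nonneg (⟪x, n⟫ - p * q + Real.sin r * Real.cos r), mul_pos hs hc, hpq, h5]

lemma my_norm_one_of_inner {x : E} (h : ⟪x, x⟫ = 1) : ‖x‖ = 1 := by
  have h2 : ‖x‖ ^ 2 = 1 := by rw [← real_inner_self_eq_norm_sq, h]
  nlinarith [norm_nonneg x]

lemma my_intersect {o c : E} (ho : ‖o‖ = 1) (hc : ‖c‖ = 1)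
    {r ρ : ℝ} (hr : r ∈ Set.Ioo 0 (Real.pi / 2)) (hρ : ρ ∈ Set.Ioo 0 (Real.pi / 2))
    (h : Real.cos (r + ρ) < ⟪o, c⟫) :
    ∃ x : E, ‖x‖ = 1 ∧ Real.cos r < ⟪x, o⟫ ∧ Real.cos ρ < ⟪x, c⟫ := by
  have hpi := Real.pi_pos
  have hγ1 : |⟪o, c⟫| ≤ 1 := by
    have := abs_real_inner_le_norm o c
    rwa [ho, hc, mul_one] at this
  set θ := Real.arccos ⟪o, c⟫ with hθ
  have hcosθ : Real.cos θ = ⟪o, c⟫ :=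
    Real.cos_arccos (by linarith [abs_le.mp hγ1]) (by linarith [abs_le.mp hγ1])
  have hθ0 : 0 ≤ θ := Real.arccos_nonneg _
  have hθpi : θ ≤ Real.pi := Real.arccos_le_pi _
  have hrρ : r + ρ < Real.pi := by linarith [hr.2, hρ.2]
  have hθlt : θ < r + ρ := by
    by_contra hcon
    push_neg at hcon
    have : Real.cos θ ≤ Real.cos (r + ρ) :=
      Real.cos_le_cos_of_nonneg_of_le_pi (by linarith [hr.1, hρ.1]) hθpi hcon
    rw [hcosθ] at this; linarith
  rcases eq_or_lt_of_le hθ0 with hθz | hθpos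
  · -- θ = 0, so o = c
    have hoc : ⟪o, c⟫ = 1 := by
      rw [← hcosθ, ← hθz, Real.cos_zero]
    have hoe : o = c := (inner_eq_one_iff_of_norm_eq_one ho hc).mp hoc
    refine ⟨o, ho, ?_, ?_⟩
    · rw [my_inner_self ho]
      have := Real.cos_lt_cos_of_nonneg_of_le_pi (le_refl 0) (by linarith [hr.2]) hr.1
      simpa using this
    · rw [hoe] at ho ⊢
      rw [my_inner_self ho]
      have : Real.cos ρ < 1 := by
        have := Real.cos_lt_cos_of_nonneg_of_le_pi (le_refl 0) (by linarith [hρ.2]) hρ.1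
        simpa using this
      exact this
  · have hsinθ : 0 < Real.sin θ := Real.sin_pos_of_pos_of_lt_pi hθpos (lt_of_lt_of_le (lt_of_lt_of_le hθlt hrρ.le) le_rfl)
    have hrρpos : 0 < r + ρ := by linarith [hr.1, hρ.1]
    set α := r * θ / (r + ρ) with hα
    set β := ρ * θ / (r + ρ) with hβ
    have hαβ : α + β = θ := by rw [hα, hβ, ← add_div, ← add_mul, mul_div_cancel_left₀ _ hrρpos.ne']
    have hα0 : 0 < α := div_pos (mul_pos hr.1 hθpos) hrρpos
    have hβ0 : 0 < β := div_pos (mul_pos hρ.1 hθpos) hrρpos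
    have hαr : α < r := by
      rw [hα, div_lt_iff₀ hrρpos]
      nlinarith [hr.1]
    have hβρ : β < ρ := by
      rw [hβ, div_lt_iff₀ hrρpos]
      nlinarith [hρ.1]
    set x : E := (Real.sin β / Real.sin θ) • o + (Real.sin α / Real.sin θ) • c with hx
    have hoo := my_inner_self ho
    have hcc := my_inner_self hc
    have hco : ⟪c, o⟫ = ⟪o, c⟫ := real_inner_comm o c
    have hsβ : Real.sin β = Real.sin θ * Real.cos α - Real.cos θ * Real.sin α := by
      rw [show β = θ - α by linarith, Real.sin_sub]
    have hsα : Real.sin α = Real.sin θ * Real.cos β - Real.cos θ * Real.sin β := by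
      rw [show α = θ - β by linarith, Real.sin_sub]
    have hxo : ⟪x, o⟫ = Real.cos α := by
      rw [hx]
      simp only [inner_add_left, real_inner_smul_left, hoo, hco, hcosθ]
      rw [← hcosθ]
      field_simp
      linear_combination hsβ
    have hxc : ⟪x, c⟫ = Real.cos β := by
      rw [hx]
      simp only [inner_add_left, real_inner_smul_left, hcc, hcosθ]
      rw [← hcosθ]
      field_simp
      linear_combination hsα
    have hxx : ⟪x, x⟫ = 1 := by
      rw [hx]
      simp only [inner_add_left, inner_add_right, real_inner_smul_left, real_inner_smul_right,
        hoo, hcc, hco, ← hcosθ]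
      have hθeq : Real.sin θ = Real.sin α * Real.cos β + Real.cos α * Real.sin β := by
        rw [← Real.sin_add, hαβ]
      have hθeq2 : Real.cos θ = Real.cos α * Real.cos β - Real.sin α * Real.sin β := by
        rw [← Real.cos_add, hαβ]
      have key : Real.sin β ^ 2 + 2 * Real.sin α * Real.sin β * Real.cos θ
          + Real.sin α ^ 2 = Real.sin θ ^ 2 := by
        rw [hθeq, hθeq2]
        linear_combination (-(Real.sin β ^ 2)) * Real.sin_sq_add_cos_sq α
          + (-(Real.sin α ^ 2)) * Real.sin_sq_add_cos_sq β
      field_simp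
      linear_combination key
    refine ⟨x, my_norm_one_of_inner hxx, ?_, ?_⟩
    · rw [hxo]
      exact Real.cos_lt_cos_of_nonneg_of_le_pi hα0.le (by linarith) hαr
    · rw [hxc]
      exact Real.cos_lt_cos_of_nonneg_of_le_pi hβ0.le (by linarith) hβρ

lemma my_three (h : (Real.sqrt 2)⁻¹ * ((Real.sqrt 3)⁻¹ + (Real.sqrt 3)⁻¹) ≤ (Real.sqrt 3)⁻¹) :
    False := by
  have p2 : 0 < Real.sqrt 2 := Real.sqrt_pos.mpr (by norm_num)
  have p3 : 0 < Real.sqrt 3 := Real.sqrt_pos.mpr (by norm_num)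
  have h2 : Real.sqrt 2 ^ 2 = 2 := Real.sq_sqrt (by norm_num)
  have i2 : Real.sqrt 2 * (Real.sqrt 2)⁻¹ = 1 := mul_inv_cancel₀ (ne_of_gt p2)
  have lt2 : Real.sqrt 2 < 2 := by nlinarith
  have h' := mul_le_mul_of_nonneg_left h p2.le
  rw [show Real.sqrt 2 * ((Real.sqrt 2)⁻¹ * ((Real.sqrt 3)⁻¹ + (Real.sqrt 3)⁻¹))
      = (Real.sqrt 2 * (Real.sqrt 2)⁻¹) * ((Real.sqrt 3)⁻¹ + (Real.sqrt 3)⁻¹) by ring,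
    i2, one_mul] at h'
  have p3i : 0 < (Real.sqrt 3)⁻¹ := inv_pos.mpr p3
  nlinarith [mul_pos p3i (show (0:ℝ) < 2 - Real.sqrt 2 by linarith)]

lemma my_core (a b t q S C R : ℝ) (hR0 : 0 < R) (hR2 : R ^ 2 = 2)
    (ha0 : 0 ≤ a) (hb0 : 0 ≤ b) (ht0 : 0 ≤ t)
    (hnorm : a ^ 2 + b ^ 2 + t ^ 2 + q ^ 2 = 1)
    (hab : a + b ≤ R * S) (ht : t ≤ S) (hq2' : q ^ 2 ≤ S ^ 2)
    (habt : a + b + t ≤ R * C - S)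
    (hS : 0 < S) (hC : 0 < C) (hSC : S ^ 2 + C ^ 2 = 1) : False := by
  have hab2 : (a + b) ^ 2 ≤ 2 * S ^ 2 := by
    have := mul_self_le_mul_self (by linarith : (0:ℝ) ≤ a + b) hab
    nlinarith [this]
  have ht2 : t ^ 2 ≤ S ^ 2 := by nlinarith
  have h1le : 1 ≤ (a + b) ^ 2 + t ^ 2 + q ^ 2 := by nlinarith [mul_nonneg ha0 hb0]
  have h4S : 1 ≤ 4 * S ^ 2 := by linarith
  have hS12 : 1 / 2 ≤ S := by nlinarith
  have hC1 : C ≤ 1 := by nlinarith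
  have hX : a + b + t + S ≤ R * C := by linarith
  have hX2 : (a + b + t + S) ^ 2 ≤ 2 * C ^ 2 := by
    have := mul_self_le_mul_self (by linarith : (0:ℝ) ≤ a + b + t + S) hX
    nlinarith [this]
  have hA2 : 1 - t ^ 2 - q ^ 2 ≤ (a + b) ^ 2 := by linarith
  have hMain : 2 * (a + b) * (t + S) ≤ 1 - 2 * t * S - 2 * S ^ 2 := by nlinarith
  rcases le_or_gt (1 - t ^ 2 - S ^ 2) 0 with hcase | hcase
  · have htC : C ≤ t := by nlinarith
    nlinarith [mul_nonneg (add_nonneg ha0 hb0) (by linarith : (0:ℝ) ≤ t + S),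
      mul_nonneg (by linarith : (0:ℝ) ≤ t - C) hS.le,
      mul_nonneg (by linarith : (0:ℝ) ≤ 2 * S - 1) hC.le,
      mul_nonneg hC.le (by linarith : (0:ℝ) ≤ 1 - C)]
  · have hApos : 0 < a + b := by nlinarith
    rcases le_or_gt (1 - 2 * t * S - 2 * S ^ 2) 0 with hD | hD
    · nlinarith [mul_pos hApos (by linarith : (0:ℝ) < t + S)]
    · have hDS : 0 < 1 - 2 * S ^ 2 := by nlinarith
      have hstep1 : (1 - 2 * S ^ 2) ^ 2 < 4 * S ^ 2 * (1 - 2 * S ^ 2) := by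
        have h6 : 0 < 6 * S ^ 2 - 1 := by linarith
        linarith [mul_pos hDS h6]
      have e1 : S ^ 2 ≤ (t + S) ^ 2 := by nlinarith [mul_nonneg ht0 hS.le]
      have e2 : 1 - 2 * S ^ 2 ≤ 1 - t ^ 2 - S ^ 2 := by nlinarith
      have hstep2 : 4 * S ^ 2 * (1 - 2 * S ^ 2) ≤ 4 * (1 - t ^ 2 - S ^ 2) * (t + S) ^ 2 := by
        linarith [mul_le_mul_of_nonneg_left e1 hDS.le,
          mul_le_mul_of_nonneg_right e2 (sq_nonneg (t + S))]
      have hstep3 : 4 * (1 - t ^ 2 - S ^ 2) * (t + S) ^ 2 ≤ (2 * (a + b) * (t + S)) ^ 2 := by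
        linarith [mul_le_mul_of_nonneg_right hA2 (sq_nonneg (t + S)),
          mul_nonneg (sub_nonneg.mpr hq2') (sq_nonneg (t + S))]
      have hstep4 : (2 * (a + b) * (t + S)) ^ 2 ≤ (1 - 2 * t * S - 2 * S ^ 2) ^ 2 := by
        have h0 : (0:ℝ) ≤ 2 * (a + b) * (t + S) := mul_nonneg (by linarith) (by linarith)
        linarith [mul_self_le_mul_self h0 hMain]
      have hstep5 : (1 - 2 * t * S - 2 * S ^ 2) ^ 2 ≤ (1 - 2 * S ^ 2) ^ 2 := by
        have h0 : 1 - 2 * t * S - 2 * S ^ 2 ≤ 1 - 2 * S ^ 2 := by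
          nlinarith [mul_nonneg ht0 hS.le]
        linarith [mul_self_le_mul_self hD.le h0]
      linarith


lemma my_inner_e (x : EuclideanSpace ℝ (Fin 4)) (m : Fin 4) :
    ⟪x, EuclideanSpace.single m (1 : ℝ)⟫ = x m := by
  rw [EuclideanSpace.inner_single_right]; simp

lemma my_inner_tTC (x : EuclideanSpace ℝ (Fin 4)) (s t : ℝ) :
    ⟪x, twoTangentCenter 0 1 s t⟫ = (Real.sqrt 2)⁻¹ * (s * x 0 + t * x 1) := by
  rw [twoTangentCenter, real_inner_smul_right, inner_add_right, real_inner_smul_right,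
    real_inner_smul_right, my_inner_e, my_inner_e]

lemma my_inner_thTC (x : EuclideanSpace ℝ (Fin 4)) (s₁ s₂ s₃ : ℝ) :
    ⟪x, threeTangentCenter s₁ s₂ s₃⟫
      = (Real.sqrt 3)⁻¹ * (s₁ * x 0 + s₂ * x 1 + s₃ * x 2) := by
  rw [threeTangentCenter, real_inner_smul_right, inner_add_right, inner_add_right,
    real_inner_smul_right, real_inner_smul_right, real_inner_smul_right,
    my_inner_e, my_inner_e, my_inner_e]

lemma my_thTC_apply0 (s₁ s₂ s₃ : ℝ) :
    threeTangentCenter s₁ s₂ s₃ 0 = (Real.sqrt 3)⁻¹ * s₁ := by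
  simp [threeTangentCenter, EuclideanSpace.single_apply]

lemma my_thTC_apply1 (s₁ s₂ s₃ : ℝ) :
    threeTangentCenter s₁ s₂ s₃ 1 = (Real.sqrt 3)⁻¹ * s₂ := by
  simp [threeTangentCenter, EuclideanSpace.single_apply]

lemma my_tTC_norm (t : ℝ) (ht : t = 1 ∨ t = -1) : ‖twoTangentCenter 0 1 1 t‖ = 1 := by
  have h2 : Real.sqrt 2 ^ 2 = 2 := Real.sq_sqrt (by norm_num)
  have hsq : ((Real.sqrt 2)⁻¹ : ℝ) * (Real.sqrt 2)⁻¹ = 1/2 := by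
    rw [← mul_inv]
    rw [show Real.sqrt 2 * Real.sqrt 2 = 2 by nlinarith [h2]]
    norm_num
  have hinner : ⟪twoTangentCenter 0 1 1 t, twoTangentCenter 0 1 1 t⟫ = 1 := by
    rw [my_inner_tTC]
    have h0 : twoTangentCenter 0 1 1 t 0 = (Real.sqrt 2)⁻¹ := by
      simp [twoTangentCenter, EuclideanSpace.single_apply]
    have h1 : twoTangentCenter 0 1 1 t 1 = (Real.sqrt 2)⁻¹ * t := by
      simp [twoTangentCenter, EuclideanSpace.single_apply]
    rw [h0, h1]
    rcases ht with h | h <;> rw [h] <;> nlinarith [hsq]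
  have h2' : ‖twoTangentCenter 0 1 1 t‖ ^ 2 = 1 := by
    rw [← real_inner_self_eq_norm_sq, hinner]
  nlinarith [norm_nonneg (twoTangentCenter 0 1 1 t)]

/-- Let `F` be a countable unconditionally symmetric packing of closed
spherical caps on `S³ ⊂ E⁴` containing the eight caps of radius `arcsin(1/√3)` centered at
`(±1/√3, ±1/√3, ±1/√3, 0)`. Then every cap of `F` is separated by one of the four pairwise
orthogonal greatspheres with normals `(1/√2, 1/√2, 0, 0)`, `(1/√2, -1/√2, 0, 0)`, `e₃`, `e₄`. -/
theorem eight_threeTangent_caps_family_separated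
    (I : Type) [Countable I]
    (o : I → EuclideanSpace ℝ (Fin 4)) (r : I → ℝ)
    (ho : ∀ i, ‖o i‖ = 1) (hr : ∀ i, r i ∈ Set.Ioo 0 (Real.pi / 2))
    (hpack : ∀ i j, i ≠ j → Disjoint
      {x : EuclideanSpace ℝ (Fin 4) | ‖x‖ = 1 ∧ Real.cos (r i) < ⟪x, o i⟫}
      {x : EuclideanSpace ℝ (Fin 4) | ‖x‖ = 1 ∧ Real.cos (r j) < ⟪x, o j⟫})
    (hsym : ∀ i, ∀ m : Fin 4, ∃ j,
      o j = o i - (2 * o i m) • EuclideanSpace.single m (1 : ℝ) ∧ r j = r i)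
    (hmem : ∀ s₁ s₂ s₃ : ℝ, (s₁ = 1 ∨ s₁ = -1) → (s₂ = 1 ∨ s₂ = -1) → (s₃ = 1 ∨ s₃ = -1) →
      ∃ i, o i = threeTangentCenter s₁ s₂ s₃ ∧
        r i = Real.arcsin (Real.sqrt 3)⁻¹) :
    ∀ i, ∃ n ∈ ({twoTangentCenter 0 1 1 1, twoTangentCenter 0 1 1 (-1),
        EuclideanSpace.single 2 (1 : ℝ), EuclideanSpace.single 3 (1 : ℝ)} :
        Set (EuclideanSpace ℝ (Fin 4))), ∃ ε : ℝ, (ε = 1 ∨ ε = -1) ∧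
      {x : EuclideanSpace ℝ (Fin 4) | ‖x‖ = 1 ∧ Real.cos (r i) ≤ ⟪x, o i⟫} ⊆
        {x : EuclideanSpace ℝ (Fin 4) | ‖x‖ = 1 ∧ 0 < ε * ⟪x, n⟫} := by
  intro i
  have hpi := Real.pi_pos
  set S := Real.sin (r i) with hSdef
  set C := Real.cos (r i) with hCdef
  have hS : 0 < S := Real.sin_pos_of_pos_of_lt_pi (hr i).1 (by linarith [(hr i).2])
  have hC : 0 < C := Real.cos_pos_of_mem_Ioo ⟨by linarith [(hr i).1], (hr i).2⟩
  have hSC : S ^ 2 + C ^ 2 = 1 := Real.sin_sq_add_cos_sq (r i)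
  have h2 : Real.sqrt 2 ^ 2 = 2 := Real.sq_sqrt (by norm_num)
  have h3 : Real.sqrt 3 ^ 2 = 3 := Real.sq_sqrt (by norm_num)
  have h2pos : 0 < Real.sqrt 2 := Real.sqrt_pos.mpr (by norm_num)
  have h3pos : 0 < Real.sqrt 3 := Real.sqrt_pos.mpr (by norm_num)
  have h2inv : Real.sqrt 2 * (Real.sqrt 2)⁻¹ = 1 := mul_inv_cancel₀ (ne_of_gt h2pos)
  have h3inv : Real.sqrt 3 * (Real.sqrt 3)⁻¹ = 1 := mul_inv_cancel₀ (ne_of_gt h3pos)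
  -- the four normal vectors, membership, and norms
  set n1 := twoTangentCenter 0 1 1 1 with hn1def
  set n2 := twoTangentCenter 0 1 1 (-1) with hn2def
  set n3 : EuclideanSpace ℝ (Fin 4) := EuclideanSpace.single 2 (1 : ℝ) with hn3def
  set n4 : EuclideanSpace ℝ (Fin 4) := EuclideanSpace.single 3 (1 : ℝ) with hn4def
  set Gset : Set (EuclideanSpace ℝ (Fin 4)) := {n1, n2, n3, n4} with hGset
  have hm1 : n1 ∈ Gset := Set.mem_insert _ _
  have hm2 : n2 ∈ Gset := Set.mem_insert_of_mem _ (Set.mem_insert _ _)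
  have hm3 : n3 ∈ Gset := Set.mem_insert_of_mem _ (Set.mem_insert_of_mem _ (Set.mem_insert _ _))
  have hm4 : n4 ∈ Gset := Set.mem_insert_of_mem _ (Set.mem_insert_of_mem _
    (Set.mem_insert_of_mem _ rfl))
  -- Key claim
  have key : ∃ n ∈ Gset, ∃ ε : ℝ, (ε = 1 ∨ ε = -1) ∧ S < ε * ⟪o i, n⟫ := by
    by_contra hcon
    push_neg at hcon
    -- the eight bounds
    have b1p := hcon n1 hm1 1 (Or.inl rfl)
    have b1m := hcon n1 hm1 (-1) (Or.inr rfl)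
    have b2p := hcon n2 hm2 1 (Or.inl rfl)
    have b2m := hcon n2 hm2 (-1) (Or.inr rfl)
    have b3p := hcon n3 hm3 1 (Or.inl rfl)
    have b3m := hcon n3 hm3 (-1) (Or.inr rfl)
    have b4p := hcon n4 hm4 1 (Or.inl rfl)
    have b4m := hcon n4 hm4 (-1) (Or.inr rfl)
    rw [hn1def, my_inner_tTC] at b1p b1m
    rw [hn2def, my_inner_tTC] at b2p b2m
    rw [hn3def, my_inner_e] at b3p b3m
    rw [hn4def, my_inner_e] at b4p b4m
    -- signs
    set s1 : ℝ := if 0 ≤ o i 0 then 1 else -1 with hs1def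
    set s2 : ℝ := if 0 ≤ o i 1 then 1 else -1 with hs2def
    set s3 : ℝ := if 0 ≤ o i 2 then 1 else -1 with hs3def
    have hs1 : s1 = 1 ∨ s1 = -1 := by rw [hs1def]; split_ifs <;> simp
    have hs2 : s2 = 1 ∨ s2 = -1 := by rw [hs2def]; split_ifs <;> simp
    have hs3 : s3 = 1 ∨ s3 = -1 := by rw [hs3def]; split_ifs <;> simp
    set a := s1 * o i 0 with hadef
    set b := s2 * o i 1 with hbdef
    set t := s3 * o i 2 with htdef
    have ha0 : 0 ≤ a := by
      rw [hadef, hs1def]; split_ifs with h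
      · linarith
      · push_neg at h; linarith
    have hb0 : 0 ≤ b := by
      rw [hbdef, hs2def]; split_ifs with h
      · linarith
      · push_neg at h; linarith
    have ht0 : 0 ≤ t := by
      rw [htdef, hs3def]; split_ifs with h
      · linarith
      · push_neg at h; linarith
    have ha2 : a ^ 2 = (o i 0) ^ 2 := by rcases hs1 with h | h <;> rw [hadef, h] <;> ring
    have hb2 : b ^ 2 = (o i 1) ^ 2 := by rcases hs2 with h | h <;> rw [hbdef, h] <;> ring
    have ht2e : t ^ 2 = (o i 2) ^ 2 := by rcases hs3 with h | h <;> rw [htdef, h] <;> ring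
    -- conversion helper
    have conv : ∀ X ε : ℝ, ε * ((Real.sqrt 2)⁻¹ * X) ≤ S → ε * X ≤ Real.sqrt 2 * S := by
      intro X ε h
      have h' := mul_le_mul_of_nonneg_left h (Real.sqrt_nonneg 2)
      calc ε * X = Real.sqrt 2 * (ε * ((Real.sqrt 2)⁻¹ * X)) := by
            rw [show Real.sqrt 2 * (ε * ((Real.sqrt 2)⁻¹ * X))
                = (Real.sqrt 2 * (Real.sqrt 2)⁻¹) * (ε * X) by ring, h2inv, one_mul]
        _ ≤ Real.sqrt 2 * S := h'
    have hab : a + b ≤ Real.sqrt 2 * S := by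
      rcases hs1 with h1 | h1 <;> rcases hs2 with h2' | h2'
      · have := conv (1 * o i 0 + 1 * o i 1) 1 b1p
        rw [hadef, hbdef, h1, h2']; linarith
      · have := conv (1 * o i 0 + -1 * o i 1) 1 b2p
        rw [hadef, hbdef, h1, h2']; linarith
      · have := conv (1 * o i 0 + -1 * o i 1) (-1) b2m
        rw [hadef, hbdef, h1, h2']; linarith
      · have := conv (1 * o i 0 + 1 * o i 1) (-1) b1m
        rw [hadef, hbdef, h1, h2']; linarith
    have ht : t ≤ S := by
      rcases hs3 with h | h <;> rw [htdef, h] <;> linarith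
    have hq2' : (o i 3) ^ 2 ≤ S ^ 2 := by
      linarith [mul_nonneg (by linarith : (0:ℝ) ≤ S - o i 3) (by linarith : (0:ℝ) ≤ S + o i 3)]
    -- norm in coordinates
    have hnorm : (o i 0) ^ 2 + (o i 1) ^ 2 + (o i 2) ^ 2 + (o i 3) ^ 2 = 1 := by
      have h := my_inner_self (ho i)
      rw [PiLp.inner_apply] at h
      simp only [Fin.sum_univ_four, RCLike.inner_apply, conj_trivial] at h
      linarith [h]
    -- the eight 3-tangent caps
    obtain ⟨j, hoj, hrj⟩ := hmem s1 s2 s3 hs1 hs2 hs3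
    have h13lt : (Real.sqrt 3)⁻¹ < 1 := by
      rw [inv_lt_one_iff₀]; right
      have := Real.sqrt_lt_sqrt (by norm_num : (0:ℝ) ≤ 1) (by norm_num : (1:ℝ) < 3)
      rwa [Real.sqrt_one] at this
    have h13pos : 0 < (Real.sqrt 3)⁻¹ := by positivity
    by_cases hji : j = i
    · -- cap i is itself a 3-tangent cap; contradicts the bounds directly
      rw [hji] at hoj hrj
      have hSval : S = (Real.sqrt 3)⁻¹ := by
        rw [hSdef, hrj, Real.sin_arcsin (by linarith) (by linarith)]
      have ho0 : o i 0 = (Real.sqrt 3)⁻¹ * s1 := by rw [hoj, my_thTC_apply0]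
      have ho1 : o i 1 = (Real.sqrt 3)⁻¹ * s2 := by rw [hoj, my_thTC_apply1]
      rcases hs1 with h1 | h1 <;> rcases hs2 with h2' | h2'
      · rw [ho0, ho1, h1, h2', hSval] at b1p
        exact my_three (by linarith [b1p])
      · rw [ho0, ho1, h1, h2', hSval] at b2p
        exact my_three (by linarith [b2p])
      · rw [ho0, ho1, h1, h2', hSval] at b2m
        exact my_three (by linarith [b2m])
      · rw [ho0, ho1, h1, h2', hSval] at b1m
        exact my_three (by linarith [b1m])
    · -- disjointness with cap j
      have hd := hpack i j (fun h => hji h.symm)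
      have hle : ⟪o i, o j⟫ ≤ Real.cos (r i + r j) := by
        by_contra hgt
        push_neg at hgt
        obtain ⟨x, hx1, hx2, hx3⟩ := my_intersect (ho i) (ho j) (hr i) (hr j) hgt
        exact Set.disjoint_left.mp hd ⟨hx1, hx2⟩ ⟨hx1, hx3⟩
      rw [hoj, my_inner_thTC, hrj, Real.cos_add] at hle
      rw [Real.sin_arcsin (by linarith) (by linarith), Real.cos_arcsin] at hle
      have hcs3 : Real.sqrt (1 - (Real.sqrt 3)⁻¹ ^ 2) = Real.sqrt 2 * (Real.sqrt 3)⁻¹ := by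
        have he : (Real.sqrt 2 * (Real.sqrt 3)⁻¹) ^ 2 = 1 - (Real.sqrt 3)⁻¹ ^ 2 := by
          rw [mul_pow, h2, inv_pow, h3]; norm_num
        rw [← he, Real.sqrt_sq (by positivity)]
      rw [hcs3] at hle
      -- multiply through by √3
      have habt : a + b + t ≤ Real.sqrt 2 * C - S := by
        have h' := mul_le_mul_of_nonneg_left hle (Real.sqrt_nonneg 3)
        have e1 : Real.sqrt 3 * ((Real.sqrt 3)⁻¹ * (s1 * o i 0 + s2 * o i 1 + s3 * o i 2))
            = a + b + t := by
          rw [show Real.sqrt 3 * ((Real.sqrt 3)⁻¹ * (s1 * o i 0 + s2 * o i 1 + s3 * o i 2))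
              = (Real.sqrt 3 * (Real.sqrt 3)⁻¹) * (s1 * o i 0 + s2 * o i 1 + s3 * o i 2) by ring,
            h3inv, one_mul, hadef, hbdef, htdef]
        have e2 : Real.sqrt 3 * (C * (Real.sqrt 2 * (Real.sqrt 3)⁻¹) - S * (Real.sqrt 3)⁻¹)
            = Real.sqrt 2 * C - S := by
          rw [show Real.sqrt 3 * (C * (Real.sqrt 2 * (Real.sqrt 3)⁻¹) - S * (Real.sqrt 3)⁻¹)
              = (Real.sqrt 3 * (Real.sqrt 3)⁻¹) * (C * Real.sqrt 2)
                - (Real.sqrt 3 * (Real.sqrt 3)⁻¹) * S by ring, h3inv]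
          ring
        rw [e1, e2] at h'
        exact h'
      exact my_core a b t (o i 3) S C (Real.sqrt 2) h2pos h2 ha0 hb0 ht0
        (by linarith [hnorm, ha2, hb2, ht2e]) hab ht hq2' habt hS hC hSC
  -- assemble the conclusion from the key claim
  obtain ⟨n, hnmem, ε, hε, hlt⟩ := key
  refine ⟨n, hnmem, ε, hε, ?_⟩
  rintro x ⟨hx1, hx2⟩
  have hn1 : ‖n‖ = 1 := by
    rcases hnmem with h | h | h | h
    · rw [h, hn1def]; exact my_tTC_norm 1 (Or.inl rfl)
    · rw [h, hn2def]; exact my_tTC_norm (-1) (Or.inr rfl)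
    · rw [h, hn3def]; simp
    · rw [h, hn4def]; simp
  have hεn : ‖ε • n‖ = 1 := by
    rw [norm_smul, hn1, Real.norm_eq_abs]
    rcases hε with h | h <;> rw [h] <;> norm_num
  have hinner : ⟪o i, ε • n⟫ = ε * ⟪o i, n⟫ := real_inner_smul_right _ _ _
  have := my_sep (ho i) hεn hx1 (hr i) (by rw [hinner]; exact hlt) hx2
  rw [real_inner_smul_right] at this
  exact ⟨hx1, this⟩
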